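/- arXiv:2308.07022 — 2 statements merged into one kernel-verified Lean document; each statement's English description precedes it below -/
import Mathlib

section
/- Let σ ∈ ℝ with σ ≠ 0. If f₁, f₂ : [0,∞) → ℝ satisfy exp(−σt)·(f₁(s) + f₂(r)) = f₁(s+t) + f₂(r−t) for all real r, s, t with r ≥ 0 ≥ t ≥ −s, then there exist constants c₁, c₂, c₁', c₂' ∈ ℝ with c₁' + c₂' = 0 such that f₁(s) = c₁·exp(−σs) + c₁' for all s ≥ 0 and f₂(r) = c₂·exp(σr) + c₂' for all r ≥ 0. -/
theorem exp_twisted_two_functions (σ : ℝ) (hσ : σ ≠ 0) (f₁ f₂ : ℝ → ℝ)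
    (heq : ∀ r s t : ℝ, 0 ≤ r → t ≤ 0 → -s ≤ t →
      Real.exp (-σ * t) * (f₁ s + f₂ r) = f₁ (s + t) + f₂ (r - t)) :
    ∃ c₁ c₂ c₁' c₂' : ℝ, c₁' + c₂' = 0 ∧
      (∀ s : ℝ, 0 ≤ s → f₁ s = c₁ * Real.exp (-σ * s) + c₁') ∧
      (∀ r : ℝ, 0 ≤ r → f₂ r = c₂ * Real.exp (σ * r) + c₂') := by
  have hexp1 : Real.exp σ - 1 ≠ 0 := by
    intro h
    apply hσ; apply Real.exp_injective; rw [Real.exp_zero]; linarith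
  set c : ℝ := (f₂ 1 - f₂ 0) / (Real.exp σ - 1) with hc
  -- key consequence with t = -s
  have h1 : ∀ r s : ℝ, 0 ≤ r → 0 ≤ s →
      f₂ (r + s) = Real.exp (σ * s) * f₁ s + Real.exp (σ * s) * f₂ r - f₁ 0 := by
    intro r s hr hs
    have h := heq r s (-s) hr (by linarith) le_rfl
    have e1 : -σ * -s = σ * s := by ring
    have e2 : s + -s = 0 := by ring
    have e3 : r - -s = r + s := by ring
    rw [e1, e2, e3] at h
    linear_combination -h
  have h2 : ∀ r s : ℝ, 0 ≤ r → 0 ≤ s →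
      f₂ (r + s) - f₂ s = Real.exp (σ * s) * (f₂ r - f₂ 0) := by
    intro r s hr hs
    have ha := h1 r s hr hs
    have hb := h1 0 s le_rfl hs
    rw [zero_add] at hb
    linear_combination ha - hb
  have hf2 : ∀ r : ℝ, 0 ≤ r → f₂ r = c * Real.exp (σ * r) + (f₂ 0 - c) := by
    intro r hr
    have ha := h2 r 1 hr zero_le_one
    have hb := h2 1 r zero_le_one hr
    rw [add_comm 1 r] at hb
    rw [mul_one] at ha
    have key : (f₂ r - f₂ 0) * (Real.exp σ - 1)
        = (f₂ 1 - f₂ 0) * (Real.exp (σ * r) - 1) := by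
      linear_combination hb - ha
    have hkey2 : f₂ r - f₂ 0 = c * (Real.exp (σ * r) - 1) := by
      rw [hc]
      field_simp
      linear_combination key
    linear_combination hkey2
  refine ⟨f₁ 0 + f₂ 0 - c, c, c - f₂ 0, f₂ 0 - c, by ring, ?_, hf2⟩
  intro s hs
  have hb := h1 0 s le_rfl hs
  rw [zero_add] at hb
  have hf2s := hf2 s hs
  have hE : Real.exp (-σ * s) * Real.exp (σ * s) = 1 := by
    rw [← Real.exp_add]
    norm_num
  linear_combination (-Real.exp (-σ * s)) * hb + Real.exp (-σ * s) * hf2s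
    - (f₁ s + f₂ 0 - c) * hE
end

section
/- If f₁ : [0,∞) → ℝ satisfies f₁(a+b) = exp(−σb)·f₁(a) + f₁(b) − exp(−σb)·f₁(0) for all a, b ≥ 0, where σ ≠ 0, then there exists c₁ ∈ ℝ such that f₁(a) = c₁·(exp(−σa) − 1) + f₁(0) for all a ≥ 0. -/
theorem twisted_cauchy (σ : ℝ) (hσ : σ ≠ 0) (f₁ : ℝ → ℝ)
    (heq : ∀ a b : ℝ, 0 ≤ a → 0 ≤ b →
      f₁ (a + b) = Real.exp (-σ * b) * f₁ a + f₁ b - Real.exp (-σ * b) * f₁ 0) :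
    ∃ c₁ : ℝ, ∀ a : ℝ, 0 ≤ a → f₁ a = c₁ * (Real.exp (-σ * a) - 1) + f₁ 0 := by
  have hne : Real.exp (-σ * 1) - 1 ≠ 0 := by
    rw [sub_ne_zero]
    simpa [Real.exp_eq_one_iff] using (by simpa using hσ : -σ * 1 ≠ 0)
  refine ⟨(f₁ 1 - f₁ 0) / (Real.exp (-σ * 1) - 1), fun a ha => ?_⟩
  have h1 := heq a 1 ha zero_le_one
  have h2 := heq 1 a zero_le_one ha
  rw [add_comm] at h2
  have key : f₁ a * (Real.exp (-σ * 1) - 1)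
      = (f₁ 1 - f₁ 0) * (Real.exp (-σ * a) - 1) + f₁ 0 * (Real.exp (-σ * 1) - 1) := by
    nlinarith [h1, h2]
  rw [eq_comm, div_mul_eq_mul_div, div_add' _ _ _ hne, div_eq_iff hne]
  linarith [key]
end
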